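/- For all natural numbers m, n, k with m ≤ n + k, one has (as integers) C(m, n + k - m, k) = Σ_{i=0}^{n} (-1)^i · 2^{n-i} · binom(m, i) · binom(k + n - i, k). -/

import Mathlib

open Finset

/-- The set of ternary words of length `m + n` (as functions `Fin (m+n) → Fin 3`)
having exactly `k` letters equal to `2` and no letter equal to `0` among the
first `m` letters. -/
def ternaryWords (m n k : ℕ) : Finset (Fin (m + n) → Fin 3) :=
  univ.filter fun w =>
    (univ.filter fun i => w i = 2).card = k ∧ ∀ i : Fin (m + n), (i : ℕ) < m → w i ≠ 0

/-- `C m n k` is the number of ternary words of length `m + n` with exactly `k`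
twos and no zero among the first `m` letters; it equals the inset number
`{m,n choose k}` of Janjić–Petković. -/
def C (m n k : ℕ) : ℕ := (ternaryWords m n k).card

lemma fin3_eq_one : ∀ a : Fin 3, a ≠ 0 → a ≠ 2 → a = 1 := by decide

lemma fin3_mem01 : ∀ a : Fin 3, a ≠ 2 → a ∈ ({0, 1} : Finset (Fin 3)) := by decide

lemma fiber_eq (m n k : ℕ) (T : Finset (Fin (m + n))) (hT : T.card = k) :
    (ternaryWords m n k).filter (fun w => univ.filter (fun i => w i = 2) = T)
      = Fintype.piFinset (fun i => if i ∈ T then ({2} : Finset (Fin 3))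
          else if (i : ℕ) < m then {1} else {0, 1}) := by
  ext w
  simp only [mem_filter, ternaryWords, Finset.mem_univ, true_and, Fintype.mem_piFinset]
  constructor
  · rintro ⟨⟨hc, hz⟩, hf⟩ i
    by_cases hiT : i ∈ T
    · have h2 : w i = 2 := by
        have := hiT; rw [← hf, mem_filter] at this; exact this.2
      simp [hiT, h2]
    · have h2 : w i ≠ 2 := fun h => hiT (by rw [← hf, mem_filter]; exact ⟨mem_univ i, h⟩)
      by_cases him : (i : ℕ) < m
      · simp [hiT, him, fin3_eq_one _ (hz i him) h2]
      · simp only [hiT, him, if_false]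
        exact fin3_mem01 _ h2
  · intro hp
    have hfT : univ.filter (fun i => w i = 2) = T := by
      ext i
      simp only [mem_filter, mem_univ, true_and]
      constructor
      · intro h2
        by_contra hiT
        have hthis := hp i
        simp only [hiT, if_false] at hthis
        by_cases him : (i : ℕ) < m
        · simp only [him, if_true, mem_singleton] at hthis
          rw [hthis] at h2; exact absurd h2 (by decide)
        · simp only [him, if_false, mem_insert, mem_singleton] at hthis
          rcases hthis with h | h <;> rw [h] at h2 <;> exact absurd h2 (by decide)
      · intro hiT
        have hthis := hp i
        simpa [hiT] using hthis
    refine ⟨⟨by rw [hfT, hT], ?_⟩, hfT⟩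
    intro i him
    by_cases hiT : i ∈ T
    · have hthis := hp i
      simp only [hiT, if_true, mem_singleton] at hthis
      rw [hthis]; decide
    · have hthis := hp i
      simp only [hiT, him, if_false, if_true, mem_singleton] at hthis
      rw [hthis]; decide

lemma fiber_card (m n k : ℕ) (T : Finset (Fin (m + n))) (hT : T.card = k) :
    ((ternaryWords m n k).filter (fun w => univ.filter (fun i => w i = 2) = T)).card
      = 2 ^ (univ.filter (fun i : Fin (m + n) => ¬ (i : ℕ) < m ∧ i ∉ T)).card := by
  rw [fiber_eq m n k T hT, Fintype.card_piFinset]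
  have hcards : ∀ i : Fin (m + n),
      (if i ∈ T then ({2} : Finset (Fin 3)) else if (i : ℕ) < m then {1} else {0, 1}).card
        = if ¬ (i : ℕ) < m ∧ i ∉ T then 2 else 1 := by
    intro i
    by_cases h1 : i ∈ T <;> by_cases h2 : (i : ℕ) < m <;> simp [h1, h2] <;> decide
  rw [Finset.prod_congr rfl (fun i _ => hcards i)]
  rw [Finset.prod_ite (fun _ => (2 : ℕ)) (fun _ => (1 : ℕ)), Finset.prod_const,
    Finset.prod_const_one, mul_one]

lemma head_card (m n : ℕ) :
    (univ.filter (fun i : Fin (m + n) => (i : ℕ) < m)).card = m := by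
  have : univ.filter (fun i : Fin (m + n) => (i : ℕ) < m)
      = (Finset.range m).attachFin
          (fun x hx => lt_of_lt_of_le (mem_range.mp hx) (Nat.le_add_right m n)) := by
    ext i
    simp [Finset.mem_attachFin]
  rw [this, Finset.card_attachFin, Finset.card_range]

lemma tail_card (m n : ℕ) :
    (univ.filter (fun i : Fin (m + n) => ¬ (i : ℕ) < m)).card = n := by
  have h := Finset.card_filter_add_card_filter_not
    (s := (univ : Finset (Fin (m + n)))) (fun i : Fin (m + n) => (i : ℕ) < m)
  rw [head_card] at h
  rw [Finset.card_univ, Fintype.card_fin] at h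
  omega

lemma count_T (m n k j : ℕ) (hj : j ≤ k) :
    (((powersetCard k (univ : Finset (Fin (m + n)))).filter
        (fun T => (T.filter (fun i : Fin (m + n) => (i : ℕ) < m)).card = j)).card)
      = m.choose j * n.choose (k - j) := by
  classical
  have hcardprod : (powersetCard j (univ.filter (fun i : Fin (m + n) => (i : ℕ) < m))
      ×ˢ powersetCard (k - j) (univ.filter (fun i : Fin (m + n) => ¬ (i : ℕ) < m))).card
      = m.choose j * n.choose (k - j) := by
    rw [Finset.card_product, Finset.card_powersetCard, Finset.card_powersetCard,
      head_card, tail_card]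
  rw [← hcardprod]
  refine Finset.card_bij'
    (fun T _ => (T.filter (fun i : Fin (m + n) => (i : ℕ) < m),
      T.filter (fun i : Fin (m + n) => ¬ (i : ℕ) < m)))
    (fun p _ => p.1 ∪ p.2) ?hi ?hj ?hli ?hri
  case hi =>
    intro T hT
    simp only [Finset.mem_filter, Finset.mem_powersetCard_univ] at hT
    obtain ⟨hcard, hjj⟩ := hT
    have hsplit := Finset.card_filter_add_card_filter_not
      (s := T) (fun i : Fin (m + n) => (i : ℕ) < m)
    simp only [Finset.mem_product, Finset.mem_powersetCard]
    refine ⟨⟨?_, hjj⟩, ?_, by omega⟩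
    · exact Finset.filter_subset_filter _ (Finset.subset_univ T)
    · exact Finset.filter_subset_filter _ (Finset.subset_univ T)
  case hj =>
    intro p hp
    simp only [Finset.mem_product, Finset.mem_powersetCard] at hp
    obtain ⟨⟨hA, hAc⟩, hB, hBc⟩ := hp
    have hdisj : Disjoint p.1 p.2 := by
      refine Finset.disjoint_left.mpr (fun a haA haB => ?_)
      have h1 := Finset.mem_filter.mp (hA haA)
      have h2 := Finset.mem_filter.mp (hB haB)
      exact h2.2 h1.2
    have hfA : (p.1 ∪ p.2).filter (fun i : Fin (m + n) => (i : ℕ) < m) = p.1 := by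
      ext i
      simp only [Finset.mem_filter, Finset.mem_union]
      constructor
      · rintro ⟨hi | hi, hlt⟩
        · exact hi
        · exact absurd hlt (Finset.mem_filter.mp (hB hi)).2
      · intro hi
        exact ⟨Or.inl hi, (Finset.mem_filter.mp (hA hi)).2⟩
    simp only [Finset.mem_filter, Finset.mem_powersetCard_univ]
    rw [Finset.card_union_of_disjoint hdisj, hfA]
    exact ⟨by omega, hAc⟩
  case hli =>
    intro T _
    exact Finset.filter_union_filter_not_eq (p := fun i : Fin (m + n) => (i : ℕ) < m) T
  case hri =>
    intro p hp
    simp only [Finset.mem_product, Finset.mem_powersetCard] at hp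
    obtain ⟨⟨hA, hAc⟩, hB, hBc⟩ := hp
    have hfA : (p.1 ∪ p.2).filter (fun i : Fin (m + n) => (i : ℕ) < m) = p.1 := by
      ext i
      simp only [Finset.mem_filter, Finset.mem_union]
      constructor
      · rintro ⟨hi | hi, hlt⟩
        · exact hi
        · exact absurd hlt (Finset.mem_filter.mp (hB hi)).2
      · intro hi
        exact ⟨Or.inl hi, (Finset.mem_filter.mp (hA hi)).2⟩
    have hfB : (p.1 ∪ p.2).filter (fun i : Fin (m + n) => ¬ (i : ℕ) < m) = p.2 := by
      ext i
      simp only [Finset.mem_filter, Finset.mem_union]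
      constructor
      · rintro ⟨hi | hi, hlt⟩
        · exact absurd (Finset.mem_filter.mp (hA hi)).2 hlt
        · exact hi
      · intro hi
        exact ⟨Or.inr hi, (Finset.mem_filter.mp (hB hi)).2⟩
    exact Prod.ext hfA hfB

lemma C_eq (m n k : ℕ) :
    C m n k = ∑ j ∈ range (k + 1), m.choose j * n.choose (k - j) * 2 ^ (n - (k - j)) := by
  classical
  have hmap : ∀ w ∈ ternaryWords m n k,
      (univ.filter fun i => w i = 2) ∈ powersetCard k (univ : Finset (Fin (m + n))) := by
    intro w hw
    rw [Finset.mem_powersetCard_univ]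
    exact ((Finset.mem_filter.mp hw).2).1
  rw [C, Finset.card_eq_sum_card_fiberwise hmap]
  have hfib : ∀ T ∈ powersetCard k (univ : Finset (Fin (m + n))),
      ((ternaryWords m n k).filter fun w => univ.filter (fun i => w i = 2) = T).card
        = 2 ^ (univ.filter (fun i : Fin (m + n) => ¬ (i : ℕ) < m ∧ i ∉ T)).card := by
    intro T hT
    exact fiber_card m n k T (Finset.mem_powersetCard_univ.mp hT)
  rw [Finset.sum_congr rfl hfib]
  have hg : ∀ T ∈ powersetCard k (univ : Finset (Fin (m + n))),
      (T.filter (fun i : Fin (m + n) => (i : ℕ) < m)).card ∈ range (k + 1) := by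
    intro T hT
    rw [Finset.mem_range]
    have := Finset.card_filter_le T (fun i : Fin (m + n) => (i : ℕ) < m)
    rw [Finset.mem_powersetCard_univ.mp hT] at this
    omega
  rw [← Finset.sum_fiberwise_of_maps_to hg]
  apply Finset.sum_congr rfl
  intro j hj
  rw [Finset.mem_range] at hj
  have hterm : ∀ T ∈ (powersetCard k (univ : Finset (Fin (m + n)))).filter
      (fun T => (T.filter (fun i : Fin (m + n) => (i : ℕ) < m)).card = j),
      2 ^ (univ.filter (fun i : Fin (m + n) => ¬ (i : ℕ) < m ∧ i ∉ T)).card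
        = 2 ^ (n - (k - j)) := by
    intro T hT
    simp only [Finset.mem_filter, Finset.mem_powersetCard_univ] at hT
    obtain ⟨hcard, hjj⟩ := hT
    have hsplit := Finset.card_filter_add_card_filter_not
      (s := T) (fun i : Fin (m + n) => (i : ℕ) < m)
    -- (T.filter ¬<m).card = k - j
    have hsplit2 := Finset.card_filter_add_card_filter_not
      (s := univ.filter (fun i : Fin (m + n) => ¬ (i : ℕ) < m)) (fun i => i ∈ T)
    have e1 : (univ.filter (fun i : Fin (m + n) => ¬ (i : ℕ) < m)).filter (fun i => i ∈ T)
        = T.filter (fun i : Fin (m + n) => ¬ (i : ℕ) < m) := by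
      ext i; simp [and_comm]
    have e2 : (univ.filter (fun i : Fin (m + n) => ¬ (i : ℕ) < m)).filter (fun i => ¬ i ∈ T)
        = univ.filter (fun i : Fin (m + n) => ¬ (i : ℕ) < m ∧ i ∉ T) := by
      ext i; simp
    rw [e1, e2, tail_card] at hsplit2
    congr 1
    omega
  rw [Finset.sum_congr rfl hterm, Finset.sum_const, count_T m n k j (by omega), smul_eq_mul]

lemma alt_sum (s n : ℕ) (hs : s ≤ n) :
    ∑ i ∈ range (n + 1), (-1 : ℤ) ^ i * 2 ^ (n - i) * (s.choose i : ℤ) = 2 ^ (n - s) := by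
  have hsub : range (s + 1) ⊆ range (n + 1) := by
    intro x hx; rw [Finset.mem_range] at *; omega
  rw [← Finset.sum_subset hsub (by
    intro x hx hnx
    rw [Finset.mem_range] at hx hnx
    have : s < x := by omega
    rw [Nat.choose_eq_zero_of_lt this]
    simp)]
  have hcong : ∀ i ∈ range (s + 1),
      (-1 : ℤ) ^ i * 2 ^ (n - i) * (s.choose i : ℤ)
        = 2 ^ (n - s) * ((-1 : ℤ) ^ i * 2 ^ (s - i) * (s.choose i : ℤ)) := by
    intro i hi
    rw [Finset.mem_range] at hi
    have : n - i = (n - s) + (s - i) := by omega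
    rw [this, pow_add]
    ring
  rw [Finset.sum_congr rfl hcong, ← Finset.mul_sum]
  have : ∑ i ∈ range (s + 1), (-1 : ℤ) ^ i * 2 ^ (s - i) * (s.choose i : ℤ) = 1 := by
    have h := add_pow (-1 : ℤ) 2 s
    norm_num at h
    exact h.symm
  rw [this, mul_one]

lemma trinom (m i j : ℕ) : m.choose i * (m - i).choose j = m.choose j * (m - j).choose i := by
  by_cases hij : i + j ≤ m
  · have h1 := Nat.choose_mul (n := m) (Nat.le_add_right i j)
    have h2 := Nat.choose_mul (n := m) (Nat.le_add_left j i)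
    rw [Nat.add_sub_cancel_left] at h1
    rw [Nat.add_sub_cancel] at h2
    have hsym : (i + j).choose i = (i + j).choose j := by
      rw [← Nat.choose_symm (Nat.le_add_right i j), Nat.add_sub_cancel_left]
    rw [hsym] at h1
    omega
  · have hz1 : m.choose i * (m - i).choose j = 0 := by
      by_cases hi : i ≤ m
      · have : m - i < j := by omega
        rw [Nat.choose_eq_zero_of_lt this, mul_zero]
      · rw [Nat.choose_eq_zero_of_lt (by omega), zero_mul]
    have hz2 : m.choose j * (m - j).choose i = 0 := by
      by_cases hjm : j ≤ m
      · have : m - j < i := by omega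
        rw [Nat.choose_eq_zero_of_lt this, mul_zero]
      · rw [Nat.choose_eq_zero_of_lt (by omega), zero_mul]
    rw [hz1, hz2]

theorem stmt_18 (m n k : ℕ) (h : m ≤ n + k) :
    (C m (n + k - m) k : ℤ) =
      ∑ i ∈ Finset.range (n + 1),
        (-1 : ℤ) ^ i * 2 ^ (n - i) * m.choose i * (k + n - i).choose k := by
  rw [C_eq]
  push_cast
  symm
  calc
    ∑ i ∈ range (n + 1), (-1 : ℤ) ^ i * 2 ^ (n - i) * (m.choose i : ℤ) * ((k + n - i).choose k : ℤ)
        = ∑ i ∈ range (n + 1), ∑ j ∈ range (k + 1),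
            (-1 : ℤ) ^ i * 2 ^ (n - i) * ((m.choose j : ℤ) * ((m - j).choose i : ℤ))
              * (((n + k - m).choose (k - j) : ℤ)) := by
      apply Finset.sum_congr rfl
      intro i hi
      rw [Finset.mem_range] at hi
      by_cases him : i ≤ m
      · have harith : k + n - i = (m - i) + (n + k - m) := by omega
        rw [harith, Nat.add_choose_eq,
          Nat.sum_antidiagonal_eq_sum_range_succ
            (fun a b => (m - i).choose a * (n + k - m).choose b) k]
        push_cast
        rw [Finset.mul_sum]
        apply Finset.sum_congr rfl
        intro j hjr
        have ht : (m.choose i : ℤ) * ((m - i).choose j : ℤ)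
            = (m.choose j : ℤ) * ((m - j).choose i : ℤ) := by
          exact_mod_cast congrArg (Nat.cast (R := ℤ)) (trinom m i j)
        calc (-1 : ℤ) ^ i * 2 ^ (n - i) * (m.choose i : ℤ)
              * ((m - i).choose j * ((n + k - m).choose (k - j) : ℤ))
            = (-1 : ℤ) ^ i * 2 ^ (n - i) * ((m.choose i : ℤ) * ((m - i).choose j : ℤ))
              * ((n + k - m).choose (k - j) : ℤ) := by ring
          _ = _ := by rw [ht]
      · have hmi : m.choose i = 0 := Nat.choose_eq_zero_of_lt (by omega)
        rw [hmi]
        rw [Finset.sum_eq_zero]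
        · push_cast; ring
        intro j hjr
        have : (m - j).choose i = 0 := Nat.choose_eq_zero_of_lt (by omega)
        rw [this]
        push_cast
        ring
    _ = ∑ j ∈ range (k + 1), (m.choose j : ℤ) * ((n + k - m).choose (k - j) : ℤ)
          * ∑ i ∈ range (n + 1), (-1 : ℤ) ^ i * 2 ^ (n - i) * (((m - j).choose i : ℤ)) := by
      rw [Finset.sum_comm]
      apply Finset.sum_congr rfl
      intro j _
      rw [Finset.mul_sum]
      apply Finset.sum_congr rfl
      intro i _
      ring
    _ = ∑ j ∈ range (k + 1),
          (m.choose j : ℤ) * ((n + k - m).choose (k - j) : ℤ) * 2 ^ (n + k - m - (k - j)) := by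
      apply Finset.sum_congr rfl
      intro j hjr
      rw [Finset.mem_range] at hjr
      by_cases hc : m - j ≤ n
      · rw [alt_sum _ _ hc]
        by_cases hjm : j ≤ m
        · have : n - (m - j) = n + k - m - (k - j) := by omega
          rw [this]
        · rw [Nat.choose_eq_zero_of_lt (show m < j by omega)]
          push_cast; ring
      · have : n + k - m < k - j := by omega
        rw [Nat.choose_eq_zero_of_lt this]
        push_cast; ring
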